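/- arXiv:2601.01482 — 2 statements merged into one kernel-verified Lean document; each statement's English description precedes it below -/
import Mathlib

section
/- Let H be a connected graph whose adjacency matrix has no eigenvalues in the open interval (-1,1). If H has a vertex of degree 1, then H is isomorphic to the single-edge graph K_2. -/
open scoped Matrix

/-- A connected graph whose adjacency matrix has no eigenvalues in `(-1,1)`
and which has a vertex of degree `1` is isomorphic to `K₂`. -/
theorem stmt0 {V : Type*} [Fintype V] [DecidableEq V]
    (H : SimpleGraph V) [DecidableRel H.Adj]
    (hconn : H.Connected)
    (hspec : ∀ μ : ℝ, Module.End.HasEigenvalue (H.adjMatrix ℝ).mulVecLin μ →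
      μ ∉ Set.Ioo (-1 : ℝ) 1)
    (hdeg : ∃ v, H.degree v = 1) :
    Nonempty (H ≃g (⊤ : SimpleGraph (Fin 2))) := by
  classical
  obtain ⟨v, hv⟩ := hdeg
  set A : Matrix V V ℝ := H.adjMatrix ℝ with hAdef
  have hA : A.IsHermitian := by
    ext i j
    simp [hAdef, Matrix.conjTranspose_apply, SimpleGraph.adjMatrix_apply, H.adj_comm]
  have hM : (A * A - 1).IsHermitian := by
    refine Matrix.IsHermitian.sub ?_ Matrix.isHermitian_one
    rw [Matrix.IsHermitian, Matrix.conjTranspose_mul, hA.eq]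
  -- A² - 1 is positive semidefinite
  have hMpsd : (A * A - 1).PosSemidef := by
    rw [hM.posSemidef_iff_eigenvalues_nonneg, Pi.le_def]; simp only [Pi.zero_apply]
    intro i
    by_contra hneg
    push_neg at hneg
    set ν := hM.eigenvalues i with hνdef
    set x : V → ℝ := ⇑(hM.eigenvectorBasis i) with hxdef
    have hx0 : x ≠ 0 := by
      intro h
      exact hM.eigenvectorBasis.orthonormal.ne_zero i (by ext w; exact congrFun h w)
    have hMx : (A * A - 1) *ᵥ x = ν • x := hM.mulVec_eigenvectorBasis i
    have hAAx : A *ᵥ (A *ᵥ x) = (ν + 1) • x := by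
      rw [Matrix.sub_mulVec, Matrix.one_mulVec] at hMx
      rw [Matrix.mulVec_mulVec]
      have : (A * A) *ᵥ x = ν • x + x := by
        rw [← hMx]; abel
      rw [this, add_smul, one_smul]
    have hself : ∀ z : V → ℝ, (0:ℝ) ≤ z ⬝ᵥ z := fun z =>
      Finset.sum_nonneg fun i _ => mul_self_nonneg (z i)
    have hxx : (0:ℝ) < x ⬝ᵥ x := by
      rcases lt_or_eq_of_le (hself x) with h | h
      · exact h
      · exact absurd ((dotProduct_self_eq_zero).mp h.symm) hx0
    -- x ⬝ (A² x) = ‖A x‖² ≥ 0, hence ν + 1 ≥ 0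
    have hnn : (0:ℝ) ≤ ν + 1 := by
      have h1 : x ⬝ᵥ (A *ᵥ (A *ᵥ x)) = (A *ᵥ x) ⬝ᵥ (A *ᵥ x) := by
        rw [Matrix.dotProduct_mulVec, ← Matrix.mulVec_transpose]
        rw [show Aᵀ = A from SimpleGraph.isSymm_adjMatrix H]
      have h2 : x ⬝ᵥ ((ν + 1) • x) = (ν + 1) * (x ⬝ᵥ x) := by
        simp [dotProduct_smul, smul_eq_mul]
      have h3 : (0:ℝ) ≤ (ν + 1) * (x ⬝ᵥ x) := by
        rw [← h2, ← hAAx, h1]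
        exact hself _
      nlinarith
    set s := Real.sqrt (ν + 1) with hsdef
    have hs0 : 0 ≤ s := Real.sqrt_nonneg _
    have hs2 : s * s = ν + 1 := Real.mul_self_sqrt hnn
    have hs1 : s < 1 := by nlinarith
    set y : V → ℝ := A *ᵥ x + s • x with hydef
    have hAy : A *ᵥ y = s • y := by
      rw [hydef, Matrix.mulVec_add, Matrix.mulVec_smul, hAAx, smul_add, smul_smul, hs2]
      abel
    by_cases hy : y = 0
    · -- A x = -s • x, so -s is an eigenvalue in (-1,1)
      have hAx : A *ᵥ x = (-s) • x := by
        have := hy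
        rw [hydef] at this
        have h := eq_neg_of_add_eq_zero_left this
        rw [h, neg_smul]
      have hev : Module.End.HasEigenvalue A.mulVecLin (-s) := by
        apply Module.End.hasEigenvalue_of_hasEigenvector (x := x)
        refine ⟨Module.End.mem_eigenspace_iff.mpr ?_, hx0⟩
        rw [Matrix.mulVecLin_apply, hAx]
      exact hspec (-s) hev ⟨by linarith, by linarith⟩
    · have hev : Module.End.HasEigenvalue A.mulVecLin s := by
        apply Module.End.hasEigenvalue_of_hasEigenvector (x := y)
        refine ⟨Module.End.mem_eigenspace_iff.mpr ?_, hy⟩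
        rw [Matrix.mulVecLin_apply, hAy]
      exact hspec s hev ⟨by linarith, by linarith⟩
  -- the pendant vertex v with unique neighbor u
  obtain ⟨u, hu⟩ := Finset.card_eq_one.mp hv
  have hadjv : ∀ w, H.Adj v w ↔ w = u := by
    intro w
    rw [← SimpleGraph.mem_neighborFinset, hu, Finset.mem_singleton]
  have hvu : H.Adj v u := (hadjv u).mpr rfl
  have hne : v ≠ u := H.ne_of_adj hvu
  -- A *ᵥ e_v = e_u
  have hAev : A *ᵥ Pi.single v 1 = Pi.single u (1:ℝ) := by
    funext w
    simp only [Matrix.mulVec_single, mul_one]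
    by_cases h : w = u
    · subst h; simp [hAdef, hvu.symm]
    · have : ¬ H.Adj w v := fun hadj => h ((hadjv w).mp hadj.symm)
      simp [hAdef, this, Pi.single_apply, h]
  -- e_v ⬝ (A²-1) e_v = 0
  have hdot : star (Pi.single v (1:ℝ)) ⬝ᵥ (A * A - 1) *ᵥ Pi.single v 1 = 0 := by
    have hstar : star (Pi.single v (1:ℝ)) = (Pi.single v 1 : V → ℝ) := by
      funext w; simp [Pi.single_apply]
    rw [hstar, Matrix.sub_mulVec, Matrix.one_mulVec, ← Matrix.mulVec_mulVec, hAev]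
    rw [dotProduct_sub, single_dotProduct, single_dotProduct]
    simp [hAdef, hvu, Pi.single_apply, hne]
  have hker : (A * A - 1) *ᵥ Pi.single v 1 = 0 :=
    (hMpsd.dotProduct_mulVec_zero_iff _).mp hdot
  have hAeu : A *ᵥ Pi.single u 1 = Pi.single v (1:ℝ) := by
    rw [Matrix.sub_mulVec, Matrix.one_mulVec, ← Matrix.mulVec_mulVec, hAev] at hker
    exact sub_eq_zero.mp hker
  have hadju : ∀ w, H.Adj u w ↔ w = v := by
    intro w
    have := congrFun hAeu w
    simp only [Matrix.mulVec_single, mul_one] at this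
    constructor
    · intro hadj
      by_contra h
      rw [Pi.single_apply, if_neg h] at this
      simp [hAdef, hadj.symm] at this
    · intro hw
      subst hw
      exact hvu.symm
  -- every vertex is v or u
  have hmem : ∀ w : V, w = v ∨ w = u := by
    have key : ∀ {a b : V} (p : H.Walk a b), (a = v ∨ a = u) → (b = v ∨ b = u) := by
      intro a b p
      induction p with
      | nil => exact id
      | cons h p ih =>
        intro hx
        apply ih
        rcases hx with rfl | rfl
        · exact Or.inr ((hadjv _).mp h)
        · exact Or.inl ((hadju _).mp h)
    intro w
    obtain ⟨p⟩ := hconn.preconnected v w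
    exact key p (Or.inl rfl)
  -- build the isomorphism
  refine ⟨⟨⟨fun w => if w = v then 0 else 1, fun i => if i = 0 then v else u, ?_, ?_⟩, ?_⟩⟩
  · intro w
    rcases hmem w with rfl | rfl
    · simp
    · simp [hne.symm]
  · intro i
    fin_cases i
    · simp
    · simp [hne.symm]
  · intro a b
    simp only [Equiv.coe_fn_mk, SimpleGraph.top_adj]
    rcases hmem a with rfl | rfl <;> rcases hmem b with rfl | rfl
    · simp
    · simp [hne.symm, hvu]
    · simp [hne.symm, hvu.symm]
    · simp [hne.symm]
end

section
/- Let G and H be connected finite simple graphs on at least one edge each, each with more than 4 vertices. If the line graphs L(G) and L(H) are isomorphic, then G and H are isomorphic. -/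
/-- The line graph of a simple graph: vertices are the edges, two being adjacent iff they
are distinct and share an endpoint. -/
def lineGraph {V : Type*} (G : SimpleGraph V) : SimpleGraph G.edgeSet where
  Adj e f := e ≠ f ∧ ∃ v, v ∈ (e : Sym2 V) ∧ v ∈ (f : Sym2 V)
  symm := by
    constructor
    rintro e f ⟨hne, v, hv1, hv2⟩
    exact ⟨hne.symm, v, hv2, hv1⟩
  loopless := by
    constructor
    rintro e ⟨hne, -⟩
    exact hne rfl

namespace Whitney16

variable {V W : Type*} {G : SimpleGraph V} {H : SimpleGraph W}

lemma lg_adj {e f : G.edgeSet} :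
    (lineGraph G).Adj e f ↔ e ≠ f ∧ ∃ v, v ∈ (e : Sym2 V) ∧ v ∈ (f : Sym2 V) := Iff.rfl

lemma sym2_shared_unique {e f : Sym2 V} (hne : e ≠ f) {a b : V}
    (h1 : a ∈ e) (h2 : b ∈ e) (h3 : a ∈ f) (h4 : b ∈ f) : a = b := by
  by_contra hab
  exact hne (((Sym2.mem_and_mem_iff hab).1 ⟨h1, h2⟩).trans
    ((Sym2.mem_and_mem_iff hab).1 ⟨h3, h4⟩).symm)

lemma coe_ne {e f : G.edgeSet} (h : e ≠ f) : (e : Sym2 V) ≠ (f : Sym2 V) :=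
  fun hh => h (Subtype.ext hh)

lemma edge_shared_unique {e f : G.edgeSet} (hne : e ≠ f) {a b : V}
    (h1 : a ∈ (e : Sym2 V)) (h2 : b ∈ (e : Sym2 V)) (h3 : a ∈ (f : Sym2 V))
    (h4 : b ∈ (f : Sym2 V)) : a = b :=
  sym2_shared_unique (coe_ne hne) h1 h2 h3 h4

lemma exists_other {e : G.edgeSet} {v : V} (h : v ∈ (e : Sym2 V)) :
    ∃ u, u ≠ v ∧ (e : Sym2 V) = s(v, u) :=
  ⟨Sym2.Mem.other h, Sym2.other_ne (G.not_isDiag_of_mem_edgeSet e.2) h, (Sym2.other_spec h).symm⟩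

lemma walk_closure {s : Set V} (hcl : ∀ x ∈ s, ∀ y, G.Adj x y → y ∈ s) :
    ∀ {a b : V}, G.Walk a b → a ∈ s → b ∈ s := by
  intro a b p
  induction p with
  | nil => exact id
  | cons h q ih => exact fun ha => ih (hcl _ ha _ h)

lemma connected_card_le [Fintype V] (hGc : G.Connected) (s : Finset V)
    (hcl : ∀ x ∈ s, ∀ y, G.Adj x y → y ∈ s) {v : V} (hv : v ∈ s) :
    Fintype.card V ≤ s.card := by
  classical
  have hall : ∀ x, x ∈ s := by
    intro x
    obtain ⟨p⟩ := hGc.preconnected v x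
    exact walk_closure (s := (↑s : Set V)) hcl p hv
  rw [← Finset.card_univ]
  exact Finset.card_le_card fun x _ => hall x


/-- A triple of edges is "even" if every other edge is adjacent (in the line graph)
to zero or exactly two of them. -/
def Even (G : SimpleGraph V) (e1 e2 e3 : G.edgeSet) : Prop :=
  ∀ g : G.edgeSet, g ≠ e1 → g ≠ e2 → g ≠ e3 →
    (¬((lineGraph G).Adj g e1 ∧ (lineGraph G).Adj g e2 ∧ (lineGraph G).Adj g e3)) ∧
    ((lineGraph G).Adj g e1 ∨ (lineGraph G).Adj g e2 ∨ (lineGraph G).Adj g e3 →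
      ((lineGraph G).Adj g e1 ∧ (lineGraph G).Adj g e2) ∨
      ((lineGraph G).Adj g e1 ∧ (lineGraph G).Adj g e3) ∨
      ((lineGraph G).Adj g e2 ∧ (lineGraph G).Adj g e3))

lemma even_map (φ : lineGraph G ≃g lineGraph H) {e1 e2 e3 : G.edgeSet}
    (h : Even G e1 e2 e3) : Even H (φ e1) (φ e2) (φ e3) := by
  intro g' hn1 hn2 hn3
  have hg' : φ (φ.symm g') = g' := φ.apply_symm_apply g'
  set g := φ.symm g' with hg
  rw [← hg'] at hn1 hn2 hn3 ⊢
  have hne : ∀ {x y : G.edgeSet}, φ x ≠ φ y → x ≠ y := fun h hh => h (by rw [hh])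
  have key := h g (hne hn1) (hne hn2) (hne hn3)
  simpa only [SimpleGraph.Iso.map_adj_iff] using key

lemma triangle_even {a b c : V} (hab : a ≠ b) (hac : a ≠ c) (hbc : b ≠ c)
    {e1 e2 e3 : G.edgeSet} (h1 : (e1 : Sym2 V) = s(a, b)) (h2 : (e2 : Sym2 V) = s(a, c))
    (h3 : (e3 : Sym2 V) = s(b, c)) : Even G e1 e2 e3 := by
  intro g hn1 hn2 hn3
  -- if g contains two of a,b,c it equals one of the triangle edges
  have two_mem : ∀ {x y : V}, x ≠ y → x ∈ (g : Sym2 V) → y ∈ (g : Sym2 V) →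
      (g : Sym2 V) = s(a,b) ∨ (g : Sym2 V) = s(a,c) ∨ (g : Sym2 V) = s(b,c) →
      False := by
    intro x y hxy hx hy hor
    rcases hor with h | h | h
    · exact hn1 (Subtype.ext (h.trans h1.symm))
    · exact hn2 (Subtype.ext (h.trans h2.symm))
    · exact hn3 (Subtype.ext (h.trans h3.symm))
  constructor
  · rintro ⟨⟨-, p, hpg, hp1⟩, ⟨-, q, hqg, hq2⟩, ⟨-, r, hrg, hr3⟩⟩
    rw [h1, Sym2.mem_iff] at hp1
    rw [h2, Sym2.mem_iff] at hq2
    rw [h3, Sym2.mem_iff] at hr3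
    rcases hp1 with rfl | rfl
    · rcases hq2 with rfl | rfl
      · rcases hr3 with rfl | rfl
        · exact two_mem hab hpg hrg (Or.inl ((Sym2.mem_and_mem_iff hab).1 ⟨hpg, hrg⟩))
        · exact two_mem hac hpg hrg (Or.inr (Or.inl ((Sym2.mem_and_mem_iff hac).1 ⟨hpg, hrg⟩)))
      · exact two_mem hac hpg hqg (Or.inr (Or.inl ((Sym2.mem_and_mem_iff hac).1 ⟨hpg, hqg⟩)))
    · rcases hq2 with rfl | rfl
      · exact two_mem hab hqg hpg (Or.inl ((Sym2.mem_and_mem_iff hab).1 ⟨hqg, hpg⟩))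
      · exact two_mem hbc hpg hqg (Or.inr (Or.inr ((Sym2.mem_and_mem_iff hbc).1 ⟨hpg, hqg⟩)))
  · rintro (⟨-, p, hpg, hp⟩ | ⟨-, q, hqg, hq⟩ | ⟨-, r, hrg, hr⟩)
    · rw [h1, Sym2.mem_iff] at hp
      rcases hp with rfl | rfl
      · exact Or.inl ⟨⟨hn1, p, hpg, by rw [h1]; exact Sym2.mem_iff.2 (Or.inl rfl)⟩,
          ⟨hn2, p, hpg, by rw [h2]; exact Sym2.mem_iff.2 (Or.inl rfl)⟩⟩
      · exact Or.inr (Or.inl ⟨⟨hn1, p, hpg, by rw [h1]; exact Sym2.mem_iff.2 (Or.inr rfl)⟩,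
          ⟨hn3, p, hpg, by rw [h3]; exact Sym2.mem_iff.2 (Or.inl rfl)⟩⟩)
    · rw [h2, Sym2.mem_iff] at hq
      rcases hq with rfl | rfl
      · exact Or.inl ⟨⟨hn1, q, hqg, by rw [h1]; exact Sym2.mem_iff.2 (Or.inl rfl)⟩,
          ⟨hn2, q, hqg, by rw [h2]; exact Sym2.mem_iff.2 (Or.inl rfl)⟩⟩
      · exact Or.inr (Or.inr ⟨⟨hn2, q, hqg, by rw [h2]; exact Sym2.mem_iff.2 (Or.inr rfl)⟩,
          ⟨hn3, q, hqg, by rw [h3]; exact Sym2.mem_iff.2 (Or.inr rfl)⟩⟩)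
    · rw [h3, Sym2.mem_iff] at hr
      rcases hr with rfl | rfl
      · exact Or.inr (Or.inl ⟨⟨hn1, r, hrg, by rw [h1]; exact Sym2.mem_iff.2 (Or.inr rfl)⟩,
          ⟨hn3, r, hrg, by rw [h3]; exact Sym2.mem_iff.2 (Or.inl rfl)⟩⟩)
      · exact Or.inr (Or.inr ⟨⟨hn2, r, hrg, by rw [h2]; exact Sym2.mem_iff.2 (Or.inr rfl)⟩,
          ⟨hn3, r, hrg, by rw [h3]; exact Sym2.mem_iff.2 (Or.inr rfl)⟩⟩)


lemma even_perm12 {e1 e2 e3 : G.edgeSet} (h : Even G e1 e2 e3) : Even G e2 e1 e3 := by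
  intro g h2 h1 h3
  have := h g h1 h2 h3
  tauto

lemma even_perm13 {e1 e2 e3 : G.edgeSet} (h : Even G e1 e2 e3) : Even G e3 e2 e1 := by
  intro g h3 h2 h1
  have := h g h1 h2 h3
  tauto

lemma leaf_step {e1 e2 e3 : G.edgeSet} (hE : Even G e1 e2 e3) {v a b c : V}
    (ha : (e1 : Sym2 V) = s(v, a)) (hb : (e2 : Sym2 V) = s(v, b))
    (hc : (e3 : Sym2 V) = s(v, c)) (hav : a ≠ v) (hab : a ≠ b) (hac : a ≠ c)
    {y : V} (hyv : y ≠ v) (hadj : G.Adj a y) : y = b ∨ y = c := by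
  set g : G.edgeSet := ⟨s(a, y), G.mem_edgeSet.2 hadj⟩ with hgdef
  have hgcoe : (g : Sym2 V) = s(a, y) := rfl
  have hga : a ∈ (g : Sym2 V) := by rw [hgcoe]; exact Sym2.mem_iff.2 (Or.inl rfl)
  have hgy : y ∈ (g : Sym2 V) := by rw [hgcoe]; exact Sym2.mem_iff.2 (Or.inr rfl)
  have hn1 : g ≠ e1 := by
    intro h
    have : s(a, y) = s(v, a) := by rw [← hgcoe, h, ha]
    rcases Sym2.eq_iff.1 this with ⟨h', -⟩ | ⟨-, h'⟩
    · exact hav h'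
    · exact hyv h'
  have hn2 : g ≠ e2 := by
    intro h
    have : s(a, y) = s(v, b) := by rw [← hgcoe, h, hb]
    rcases Sym2.eq_iff.1 this with ⟨h', -⟩ | ⟨-, h'⟩
    · exact hav h'
    · exact hyv h'
  have hn3 : g ≠ e3 := by
    intro h
    have : s(a, y) = s(v, c) := by rw [← hgcoe, h, hc]
    rcases Sym2.eq_iff.1 this with ⟨h', -⟩ | ⟨-, h'⟩
    · exact hav h'
    · exact hyv h'
  have hadj1 : (lineGraph G).Adj g e1 :=
    ⟨hn1, a, hga, by rw [ha]; exact Sym2.mem_iff.2 (Or.inr rfl)⟩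
  have h2 := (hE g hn1 hn2 hn3).2 (Or.inl hadj1)
  have h23 : (lineGraph G).Adj g e2 ∨ (lineGraph G).Adj g e3 := by tauto
  rcases h23 with ⟨-, u, hug, hue⟩ | ⟨-, u, hug, hue⟩
  · rw [hgcoe, Sym2.mem_iff] at hug
    rw [hb, Sym2.mem_iff] at hue
    left
    rcases hug with rfl | rfl
    · rcases hue with h' | h'
      · exact absurd h' hav
      · exact absurd h' hab
    · rcases hue with h' | h'
      · exact absurd h' hyv
      · exact h'
  · rw [hgcoe, Sym2.mem_iff] at hug
    rw [hc, Sym2.mem_iff] at hue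
    right
    rcases hug with rfl | rfl
    · rcases hue with h' | h'
      · exact absurd h' hav
      · exact absurd h' hac
    · rcases hue with h' | h'
      · exact absurd h' hyv
      · exact h'

lemma star_not_even [Fintype V] (hGc : G.Connected) (hGV : 4 < Fintype.card V)
    {e1 e2 e3 : G.edgeSet} (h12 : e1 ≠ e2) (h13 : e1 ≠ e3) (h23 : e2 ≠ e3)
    {v : V} (hv1 : v ∈ (e1 : Sym2 V)) (hv2 : v ∈ (e2 : Sym2 V))
    (hv3 : v ∈ (e3 : Sym2 V)) : ¬Even G e1 e2 e3 := by
  intro hE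
  classical
  obtain ⟨a, hav, ha⟩ := exists_other hv1
  obtain ⟨b, hbv, hb⟩ := exists_other hv2
  obtain ⟨c, hcv, hc⟩ := exists_other hv3
  have hab : a ≠ b := by
    rintro rfl
    exact coe_ne h12 (by rw [ha, hb])
  have hac : a ≠ c := by
    rintro rfl
    exact coe_ne h13 (by rw [ha, hc])
  have hbc : b ≠ c := by
    rintro rfl
    exact coe_ne h23 (by rw [hb, hc])
  set s : Finset V := {v, a, b, c} with hs
  have hmem : ∀ x : V, x ∈ s ↔ x = v ∨ x = a ∨ x = b ∨ x = c := by
    intro x; simp [hs]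
  have hcl : ∀ x ∈ s, ∀ y, G.Adj x y → y ∈ s := by
    intro x hx y hxy
    have hyx : y ≠ x := fun h => G.loopless.irrefl x (h ▸ hxy)
    rcases (hmem x).1 hx with rfl | rfl | rfl | rfl
    · -- x = v : edge s(v,y) must be one of e1,e2,e3
      set g : G.edgeSet := ⟨s(x, y), G.mem_edgeSet.2 hxy⟩ with hgdef
      have hgcoe : (g : Sym2 V) = s(x, y) := rfl
      have hgx : x ∈ (g : Sym2 V) := by rw [hgcoe]; exact Sym2.mem_iff.2 (Or.inl rfl)
      have hgy : y ∈ (g : Sym2 V) := by rw [hgcoe]; exact Sym2.mem_iff.2 (Or.inr rfl)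
      by_cases hg1 : g = e1
      · have : s(x, y) = s(x, a) := by rw [← hgcoe, hg1, ha]
        rcases Sym2.eq_iff.1 this with ⟨-, rfl⟩ | ⟨h', -⟩
        · exact (hmem _).2 (Or.inr (Or.inl rfl))
        · exact absurd h'.symm hav
      by_cases hg2 : g = e2
      · have : s(x, y) = s(x, b) := by rw [← hgcoe, hg2, hb]
        rcases Sym2.eq_iff.1 this with ⟨-, rfl⟩ | ⟨h', -⟩
        · exact (hmem _).2 (Or.inr (Or.inr (Or.inl rfl)))
        · exact absurd h'.symm hbv
      by_cases hg3 : g = e3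
      · have : s(x, y) = s(x, c) := by rw [← hgcoe, hg3, hc]
        rcases Sym2.eq_iff.1 this with ⟨-, rfl⟩ | ⟨h', -⟩
        · exact (hmem _).2 (Or.inr (Or.inr (Or.inr rfl)))
        · exact absurd h'.symm hcv
      exact absurd ⟨⟨hg1, x, hgx, hv1⟩, ⟨hg2, x, hgx, hv2⟩, ⟨hg3, x, hgx, hv3⟩⟩
        (hE g hg1 hg2 hg3).1
    · -- x = a
      by_cases hyv : y = v
      · exact (hmem _).2 (Or.inl hyv)
      · rcases leaf_step hE ha hb hc hav hab hac hyv hxy with rfl | rfl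
        · exact (hmem _).2 (Or.inr (Or.inr (Or.inl rfl)))
        · exact (hmem _).2 (Or.inr (Or.inr (Or.inr rfl)))
    · -- x = b
      by_cases hyv : y = v
      · exact (hmem _).2 (Or.inl hyv)
      · rcases leaf_step (even_perm12 hE) hb ha hc hbv (Ne.symm hab) hbc hyv hxy with rfl | rfl
        · exact (hmem _).2 (Or.inr (Or.inl rfl))
        · exact (hmem _).2 (Or.inr (Or.inr (Or.inr rfl)))
    · -- x = c
      by_cases hyv : y = v
      · exact (hmem _).2 (Or.inl hyv)
      · rcases leaf_step (even_perm13 hE) hc hb ha hcv (Ne.symm hbc) (Ne.symm hac) hyv hxy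
          with rfl | rfl
        · exact (hmem _).2 (Or.inr (Or.inr (Or.inl rfl)))
        · exact (hmem _).2 (Or.inr (Or.inl rfl))
  have hle := connected_card_le hGc s hcl ((hmem v).2 (Or.inl rfl))
  have hcard : s.card ≤ 4 := by
    have h1 := Finset.card_insert_le v ({a, b, c} : Finset V)
    have h2 := Finset.card_insert_le a ({b, c} : Finset V)
    have h3 := Finset.card_insert_le b ({c} : Finset V)
    have h4 : ({c} : Finset V).card = 1 := Finset.card_singleton c
    rw [hs]
    omega
  omega


lemma common_map [Fintype V] (hGc : G.Connected) (hGV : 4 < Fintype.card V)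
    (φ : lineGraph G ≃g lineGraph H) {e1 e2 e3 : G.edgeSet}
    (h12 : e1 ≠ e2) (h13 : e1 ≠ e3) (h23 : e2 ≠ e3) {v : V}
    (h1 : v ∈ (e1 : Sym2 V)) (h2 : v ∈ (e2 : Sym2 V)) (h3 : v ∈ (e3 : Sym2 V)) :
    ∃ w, w ∈ (φ e1 : Sym2 W) ∧ w ∈ (φ e2 : Sym2 W) ∧ w ∈ (φ e3 : Sym2 W) := by
  have hnE : ¬Even G e1 e2 e3 := star_not_even hGc hGV h12 h13 h23 h1 h2 h3
  have hnE' : ¬Even H (φ e1) (φ e2) (φ e3) := by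
    intro h
    have := even_map φ.symm h
    simp only [RelIso.symm_apply_apply] at this
    exact hnE this
  have h12' : φ e1 ≠ φ e2 := fun h => h12 (φ.injective h)
  have h13' : φ e1 ≠ φ e3 := fun h => h13 (φ.injective h)
  have h23' : φ e2 ≠ φ e3 := fun h => h23 (φ.injective h)
  obtain ⟨-, x, hx1, hx2⟩ := φ.map_adj_iff.2 (⟨h12, v, h1, h2⟩ : (lineGraph G).Adj e1 e2)
  obtain ⟨-, y, hy1, hy3⟩ := φ.map_adj_iff.2 (⟨h13, v, h1, h3⟩ : (lineGraph G).Adj e1 e3)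
  obtain ⟨-, z, hz2, hz3⟩ := φ.map_adj_iff.2 (⟨h23, v, h2, h3⟩ : (lineGraph G).Adj e2 e3)
  by_cases hxy : x = y
  · exact ⟨x, hx1, hx2, hxy ▸ hy3⟩
  by_cases hxz : x = z
  · exact ⟨x, hx1, hx2, hxz ▸ hz3⟩
  by_cases hyz : y = z
  · exact ⟨y, hy1, hyz ▸ hz2, hy3⟩
  exfalso
  exact hnE' (triangle_even hxy hxz hyz ((Sym2.mem_and_mem_iff hxy).1 ⟨hx1, hy1⟩)
    ((Sym2.mem_and_mem_iff hxz).1 ⟨hx2, hz2⟩) ((Sym2.mem_and_mem_iff hyz).1 ⟨hy3, hz3⟩))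

lemma exists_P [Fintype V] [Fintype W] (hGc : G.Connected) (hGV : 4 < Fintype.card V)
    (hHc : H.Connected) (hHV : 4 < Fintype.card W)
    (φ : lineGraph G ≃g lineGraph H) {v : V} {e1 e2 : G.edgeSet}
    (h1 : v ∈ (e1 : Sym2 V)) (h2 : v ∈ (e2 : Sym2 V)) (hne : e1 ≠ e2) :
    ∃ w : W, ∀ e : G.edgeSet, v ∈ (e : Sym2 V) ↔ w ∈ (φ e : Sym2 W) := by
  have h12' : φ e1 ≠ φ e2 := fun h => hne (φ.injective h)
  obtain ⟨-, w, hw1, hw2⟩ := φ.map_adj_iff.2 (⟨hne, v, h1, h2⟩ : (lineGraph G).Adj e1 e2)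
  refine ⟨w, fun e => ⟨fun hve => ?_, fun hwe => ?_⟩⟩
  · by_cases he1 : e = e1
    · exact he1 ▸ hw1
    by_cases he2 : e = e2
    · exact he2 ▸ hw2
    obtain ⟨w', hw'1, hw'2, hw'3⟩ :=
      common_map hGc hGV φ hne (Ne.symm he1) (Ne.symm he2) h1 h2 hve
    exact edge_shared_unique (G := H) h12' hw'1 hw1 hw'2 hw2 ▸ hw'3
  · by_cases he1 : e = e1
    · exact he1 ▸ h1
    by_cases he2 : e = e2
    · exact he2 ▸ h2
    have he1' : φ e1 ≠ φ e := fun h => he1 (φ.injective h).symm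
    have he2' : φ e2 ≠ φ e := fun h => he2 (φ.injective h).symm
    obtain ⟨u, hu1, hu2, hu3⟩ :=
      common_map hHc hHV φ.symm h12' he1' he2' hw1 hw2 hwe
    simp only [RelIso.symm_apply_apply] at hu1 hu2 hu3
    exact edge_shared_unique (G := G) hne hu1 h1 hu2 h2 ▸ hu3


/-- A vertex is big if it lies on two distinct edges. -/
def Big (G : SimpleGraph V) (v : V) : Prop :=
  ∃ e f : G.edgeSet, e ≠ f ∧ v ∈ (e : Sym2 V) ∧ v ∈ (f : Sym2 V)

lemma not_big_unique {v : V} (h : ¬Big G v) {e f : G.edgeSet}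
    (he : v ∈ (e : Sym2 V)) (hf : v ∈ (f : Sym2 V)) : e = f := by
  by_contra hne
  exact h ⟨e, f, hne, he, hf⟩

lemma exists_edge [Fintype V] (hGc : G.Connected) (hGV : 4 < Fintype.card V) (v : V) :
    ∃ e : G.edgeSet, v ∈ (e : Sym2 V) := by
  have : Nontrivial V := Fintype.one_lt_card_iff_nontrivial.1 (by omega)
  obtain ⟨u, hu⟩ := exists_ne v
  obtain ⟨p⟩ := hGc.preconnected v u
  cases p with
  | nil => exact absurd rfl hu.symm
  | cons hadj q => exact ⟨⟨s(v, _), G.mem_edgeSet.2 hadj⟩, Sym2.mem_iff.2 (Or.inl rfl)⟩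

lemma neighbor_big [Fintype V] (hGc : G.Connected) (hGV : 4 < Fintype.card V)
    {v u : V} {e : G.edgeSet} (hnB : ¬Big G v) (hve : v ∈ (e : Sym2 V))
    (hue : u ∈ (e : Sym2 V)) (huv : u ≠ v) : Big G u := by
  by_contra hnBu
  classical
  have hecoe : (e : Sym2 V) = s(v, u) := (Sym2.mem_and_mem_iff (Ne.symm huv)).1 ⟨hve, hue⟩
  set s : Finset V := {v, u} with hs
  have hmem : ∀ x : V, x ∈ s ↔ x = v ∨ x = u := by intro x; simp [hs]
  have hcl : ∀ x ∈ s, ∀ y, G.Adj x y → y ∈ s := by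
    intro x hx y hxy
    set g : G.edgeSet := ⟨s(x, y), G.mem_edgeSet.2 hxy⟩ with hgdef
    have hgx : x ∈ (g : Sym2 V) := Sym2.mem_iff.2 (Or.inl rfl)
    have hgy : y ∈ (g : Sym2 V) := Sym2.mem_iff.2 (Or.inr rfl)
    rcases (hmem x).1 hx with rfl | rfl
    · have hge : g = e := not_big_unique hnB hgx hve
      have : y ∈ (e : Sym2 V) := hge ▸ hgy
      rw [hecoe, Sym2.mem_iff] at this
      exact (hmem y).2 this
    · have hge : g = e := not_big_unique hnBu hgx hue
      have : y ∈ (e : Sym2 V) := hge ▸ hgy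
      rw [hecoe, Sym2.mem_iff] at this
      exact (hmem y).2 this
  have hle := connected_card_le hGc s hcl ((hmem v).2 (Or.inl rfl))
  have hcard : s.card ≤ 2 := by
    have h1 := Finset.card_insert_le v ({u} : Finset V)
    have h2 : ({u} : Finset V).card = 1 := Finset.card_singleton u
    rw [hs]
    omega
  omega

/-- The specification of the vertex map induced by a line graph isomorphism. -/
def FSpec (φ : lineGraph G ≃g lineGraph H) (f : V → W) : Prop :=
  ∀ v : V,
    (Big G v → (∀ e : G.edgeSet, v ∈ (e : Sym2 V) ↔ f v ∈ (φ e : Sym2 W)) ∧ Big H (f v)) ∧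
    (¬Big G v → ∃ e : G.edgeSet, v ∈ (e : Sym2 V) ∧ f v ∈ (φ e : Sym2 W) ∧ ¬Big H (f v))

lemma exists_fspec [Fintype V] [Fintype W] (hGc : G.Connected) (hGV : 4 < Fintype.card V)
    (hHc : H.Connected) (hHV : 4 < Fintype.card W) (φ : lineGraph G ≃g lineGraph H) :
    ∃ f : V → W, FSpec φ f := by
  have key : ∀ v : V, ∃ w : W,
      (Big G v → (∀ e : G.edgeSet, v ∈ (e : Sym2 V) ↔ w ∈ (φ e : Sym2 W)) ∧ Big H w) ∧
      (¬Big G v → ∃ e : G.edgeSet, v ∈ (e : Sym2 V) ∧ w ∈ (φ e : Sym2 W) ∧ ¬Big H w) := by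
    intro v
    by_cases hB : Big G v
    · obtain ⟨e1, e2, hne, h1, h2⟩ := hB
      obtain ⟨w, hw⟩ := exists_P hGc hGV hHc hHV φ h1 h2 hne
      refine ⟨w, fun _ => ⟨hw, ?_⟩, fun h => absurd ⟨e1, e2, hne, h1, h2⟩ h⟩
      exact ⟨φ e1, φ e2, fun h => hne (φ.injective h), (hw e1).1 h1, (hw e2).1 h2⟩
    · obtain ⟨e, hve⟩ := exists_edge hGc hGV v
      obtain ⟨u, huv, hecoe⟩ := exists_other hve
      have hue : u ∈ (e : Sym2 V) := by rw [hecoe]; exact Sym2.mem_iff.2 (Or.inr rfl)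
      have hBu : Big G u := neighbor_big hGc hGV hB hve hue huv
      obtain ⟨f1, f2, hfne, hf1, hf2⟩ := hBu
      obtain ⟨wu, hwu⟩ := exists_P hGc hGV hHc hHV φ hf1 hf2 hfne
      have hwue : wu ∈ (φ e : Sym2 W) := (hwu e).1 hue
      obtain ⟨w', hw'ne, hφecoe⟩ := exists_other (G := H) hwue
      have hw'e : w' ∈ (φ e : Sym2 W) := by rw [hφecoe]; exact Sym2.mem_iff.2 (Or.inr rfl)
      have hw'small : ¬Big H w' := by
        intro hBw'
        obtain ⟨g1, g2, hgne, hg1, hg2⟩ := hBw'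
        obtain ⟨u', hu'⟩ := exists_P hHc hHV hGc hGV φ.symm hg1 hg2 hgne
        have hu'e : u' ∈ (e : Sym2 V) := by
          have := (hu' (φ e)).1 hw'e
          simpa using this
        have hu'Big : Big G u' := by
          refine ⟨φ.symm g1, φ.symm g2, fun h => hgne (φ.symm.injective h),
            (hu' g1).1 hg1, (hu' g2).1 hg2⟩
        rw [hecoe, Sym2.mem_iff] at hu'e
        rcases hu'e with rfl | rfl
        · exact hB hu'Big
        · -- u' = u : then w' agrees with wu on being the star vertex of u, contradiction
          have hw'f1 : w' ∈ (φ f1 : Sym2 W) := by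
            have := (hu' (φ f1)).2 (by simpa using hf1)
            exact this
          have hw'f2 : w' ∈ (φ f2 : Sym2 W) := by
            have := (hu' (φ f2)).2 (by simpa using hf2)
            exact this
          have hwuf1 : wu ∈ (φ f1 : Sym2 W) := (hwu f1).1 hf1
          have hwuf2 : wu ∈ (φ f2 : Sym2 W) := (hwu f2).1 hf2
          have hfne' : φ f1 ≠ φ f2 := fun h => hfne (φ.injective h)
          exact hw'ne (edge_shared_unique (G := H) hfne' hw'f1 hwuf1 hw'f2 hwuf2)
      exact ⟨w', fun h => absurd h hB, fun _ => ⟨e, hve, hw'e, hw'small⟩⟩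
  choose f hf using key
  exact ⟨f, hf⟩


lemma big_of_fspec {φ : lineGraph G ≃g lineGraph H} {f : V → W} (hf : FSpec φ f)
    {v : V} (hB : Big G v) : Big H (f v) := ((hf v).1 hB).2

lemma fspec_adj [Fintype V] [Fintype W] (hGc : G.Connected) (hGV : 4 < Fintype.card V)
    {φ : lineGraph G ≃g lineGraph H} {f : V → W} (hf : FSpec φ f)
    {v u : V} (hadj : G.Adj v u) : H.Adj (f v) (f u) := by
  have aux : ∀ v u : V, G.Adj v u → ¬Big G v → H.Adj (f v) (f u) := by
    intro v u hadj hnBv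
    set e : G.edgeSet := ⟨s(v, u), G.mem_edgeSet.2 hadj⟩ with hedef
    have hve : v ∈ (e : Sym2 V) := Sym2.mem_iff.2 (Or.inl rfl)
    have hue : u ∈ (e : Sym2 V) := Sym2.mem_iff.2 (Or.inr rfl)
    have hBu : Big G u := neighbor_big hGc hGV hnBv hve hue hadj.ne'
    obtain ⟨e0, hve0, hfve0, hnBfv⟩ := (hf v).2 hnBv
    have he0 : e0 = e := not_big_unique hnBv hve0 hve
    have hfve : f v ∈ (φ e : Sym2 W) := he0 ▸ hfve0
    have hfue : f u ∈ (φ e : Sym2 W) := (((hf u).1 hBu).1 e).1 hue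
    have hne : f v ≠ f u := fun h => hnBfv (h ▸ big_of_fspec hf hBu)
    have hcoe : (φ e : Sym2 W) = s(f v, f u) := (Sym2.mem_and_mem_iff hne).1 ⟨hfve, hfue⟩
    exact H.mem_edgeSet.1 (hcoe ▸ (φ e).2)
  by_cases hBv : Big G v
  · by_cases hBu : Big G u
    · set e : G.edgeSet := ⟨s(v, u), G.mem_edgeSet.2 hadj⟩ with hedef
      have hve : v ∈ (e : Sym2 V) := Sym2.mem_iff.2 (Or.inl rfl)
      have hue : u ∈ (e : Sym2 V) := Sym2.mem_iff.2 (Or.inr rfl)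
      have hPv := ((hf v).1 hBv).1
      have hPu := ((hf u).1 hBu).1
      have hfve : f v ∈ (φ e : Sym2 W) := (hPv e).1 hve
      have hfue : f u ∈ (φ e : Sym2 W) := (hPu e).1 hue
      have hne : f v ≠ f u := by
        intro h
        obtain ⟨e1, e2, hne12, h1, h2⟩ := hBv
        have hu1 : u ∈ (e1 : Sym2 V) := (hPu e1).2 (h ▸ (hPv e1).1 h1)
        have hu2 : u ∈ (e2 : Sym2 V) := (hPu e2).2 (h ▸ (hPv e2).1 h2)
        exact hadj.ne (edge_shared_unique hne12 h1 hu1 h2 hu2)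
      have hcoe : (φ e : Sym2 W) = s(f v, f u) := (Sym2.mem_and_mem_iff hne).1 ⟨hfve, hfue⟩
      exact H.mem_edgeSet.1 (hcoe ▸ (φ e).2)
    · exact (aux u v hadj.symm hBu).symm
  · exact aux v u hadj hBv

lemma fspec_leftinv [Fintype V] [Fintype W] (hGc : G.Connected) (hGV : 4 < Fintype.card V)
    (hHc : H.Connected) (hHV : 4 < Fintype.card W)
    {φ : lineGraph G ≃g lineGraph H} {f : V → W} {g : W → V}
    (hf : FSpec φ f) (hg : FSpec φ.symm g) : ∀ v : V, g (f v) = v := by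
  intro v
  by_cases hBv : Big G v
  · have hPv := ((hf v).1 hBv).1
    have hBfv := ((hf v).1 hBv).2
    have hPg := ((hg (f v)).1 hBfv).1
    have hcomb : ∀ e : G.edgeSet, v ∈ (e : Sym2 V) ↔ g (f v) ∈ (e : Sym2 V) := by
      intro e
      have := hPg (φ e)
      simp only [RelIso.symm_apply_apply] at this
      exact (hPv e).trans this
    obtain ⟨e1, e2, hne12, h1, h2⟩ := hBv
    exact edge_shared_unique hne12 ((hcomb e1).1 h1) h1 ((hcomb e2).1 h2) h2
  · obtain ⟨e, hve, hfve, hnBfv⟩ := (hf v).2 hBv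
    obtain ⟨gE, h1, h2, hnBg⟩ := (hg (f v)).2 hnBfv
    have hgE : gE = φ e := not_big_unique hnBfv h1 hfve
    have h2' : g (f v) ∈ (e : Sym2 V) := by
      rw [hgE] at h2
      simpa using h2
    by_contra hne
    exact hnBg (neighbor_big hGc hGV hBv hve h2' hne)

end Whitney16

/-- Whitney: connected graphs with an edge and more than 4 vertices having
isomorphic line graphs are isomorphic. -/
theorem stmt16 {V W : Type*} [Fintype V] [Fintype W]
    (G : SimpleGraph V) (H : SimpleGraph W)
    (hGc : G.Connected) (hHc : H.Connected)
    (hGe : G.edgeSet.Nonempty) (hHe : H.edgeSet.Nonempty)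
    (hGV : 4 < Fintype.card V) (hHV : 4 < Fintype.card W)
    (h : Nonempty (lineGraph G ≃g lineGraph H)) :
    Nonempty (G ≃g H) := by
  obtain ⟨φ⟩ := h
  obtain ⟨f, hf⟩ := Whitney16.exists_fspec hGc hGV hHc hHV φ
  obtain ⟨g, hg⟩ := Whitney16.exists_fspec hHc hHV hGc hGV φ.symm
  have hf' : Whitney16.FSpec φ.symm.symm f := hf
  have hgf : ∀ v, g (f v) = v := Whitney16.fspec_leftinv hGc hGV hHc hHV hf hg
  have hfg : ∀ w, f (g w) = w := Whitney16.fspec_leftinv hHc hHV hGc hGV hg hf'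
  refine ⟨⟨⟨f, g, hgf, hfg⟩, ?_⟩⟩
  intro a b
  show H.Adj (f a) (f b) ↔ G.Adj a b
  constructor
  · intro hadj
    have := Whitney16.fspec_adj hHc hHV hg hadj
    rwa [hgf, hgf] at this
  · exact fun hadj => Whitney16.fspec_adj hGc hGV hf hadj
end
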